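/- Let E be a finite-dimensional real inner product space, c > 0, let G : E → ℝ be twice continuously differentiable, and let φ : E → E be differentiable and satisfy ∇G(φ(x)) + c (φ(x) − x) = 0 for every x ∈ E. Then for every x ∈ E, (id + c⁻¹ ∇²G(φ(x))) ∘ Dφ(x) = id, where ∇²G(y) denotes the derivative of the gradient map ∇G at y (a continuous linear map E → E) and Dφ(x) the derivative of φ at x. Moreover, if T := id + c⁻¹ ∇²G(φ(x)) is invertible, then Dφ(x) = T⁻¹, and for every function H : E → ℝ differentiable at φ(x), the gradient of H ∘ φ at x equals T⁻¹ (∇H(φ(x))). -/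

import Mathlib

open ContinuousLinearMap
open scoped RealInnerProductSpace


noncomputable def dualIsoReal (E : Type*) [NormedAddCommGroup E] [InnerProductSpace ℝ E]
    [CompleteSpace E] : StrongDual ℝ E ≃ₗᵢ[ℝ] E :=
  (InnerProductSpace.toDual ℝ E).symm

lemma dualIsoReal_inner {E : Type*} [NormedAddCommGroup E] [InnerProductSpace ℝ E]
    [CompleteSpace E] (L : StrongDual ℝ E) (w : E) :
    @inner ℝ _ _ (dualIsoReal E L) w = L w :=
  InnerProductSpace.toDual_symm_apply

lemma gradient_eq_dualIsoReal {E : Type*} [NormedAddCommGroup E] [InnerProductSpace ℝ E]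
    [CompleteSpace E] (G : E → ℝ) : gradient G = ⇑(dualIsoReal E) ∘ fderiv ℝ G :=
  rfl


/-- Implicit-differentiation identity behind Lemma 6 (hyper-gradient of the
meta-regularization bi-level problem): if `∇G(φ(x)) + c(φ(x) − x) = 0` for all `x`,
then `(id + c⁻¹ ∇²G(φ(x))) ∘ Dφ(x) = id`; moreover if `T = id + c⁻¹ ∇²G(φ(x))` has a
two-sided inverse `T⁻¹`, then `Dφ(x) = T⁻¹` and `∇(H ∘ φ)(x) = T⁻¹ (∇H(φ(x)))` for
every `H` differentiable at `φ(x)`. -/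
theorem implicit_differentiation_hypergradient
    {E : Type*} [NormedAddCommGroup E] [InnerProductSpace ℝ E] [FiniteDimensional ℝ E]
    (c : ℝ) (hc : 0 < c)
    (G : E → ℝ) (hG : ContDiff ℝ 2 G)
    (φ : E → E) (hφ : Differentiable ℝ φ)
    (hopt : ∀ x, gradient G (φ x) + c • (φ x - x) = 0) :
    (∀ x : E,
        (ContinuousLinearMap.id ℝ E + c⁻¹ • fderiv ℝ (gradient G) (φ x)).comp
            (fderiv ℝ φ x) =
          ContinuousLinearMap.id ℝ E) ∧
      (∀ x : E, ∀ Tinv : E →L[ℝ] E,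
        (ContinuousLinearMap.id ℝ E + c⁻¹ • fderiv ℝ (gradient G) (φ x)).comp Tinv =
            ContinuousLinearMap.id ℝ E →
        Tinv.comp (ContinuousLinearMap.id ℝ E + c⁻¹ • fderiv ℝ (gradient G) (φ x)) =
            ContinuousLinearMap.id ℝ E →
        (fderiv ℝ φ x = (Tinv : E →L[ℝ] E)) ∧
          ∀ H : E → ℝ, DifferentiableAt ℝ H (φ x) →
            gradient (H ∘ φ) x = Tinv (gradient H (φ x))) := by
  classical
  have hg1 : ContDiff ℝ 1 (fderiv ℝ G) := hG.fderiv_right (by norm_num)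
  have hgrad_eq : gradient G = ⇑(dualIsoReal E) ∘ (fderiv ℝ G) := gradient_eq_dualIsoReal G
  have hgd : Differentiable ℝ (gradient G) := by
    rw [hgrad_eq]
    exact (dualIsoReal E).differentiable.comp (hg1.differentiable one_ne_zero)
  have hA : ∀ y : E, fderiv ℝ (gradient G) y =
      ((dualIsoReal E : StrongDual ℝ E →L[ℝ] E)).comp (fderiv ℝ (fderiv ℝ G) y) := by
    intro y
    rw [hgrad_eq]
    exact (dualIsoReal E).comp_fderiv
  have key : ∀ x : E, (fderiv ℝ (gradient G) (φ x)).comp (fderiv ℝ φ x)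
      = c • (ContinuousLinearMap.id ℝ E - fderiv ℝ φ x) := by
    intro x
    have h1 : HasFDerivAt (fun y => gradient G (φ y))
        ((fderiv ℝ (gradient G) (φ x)).comp (fderiv ℝ φ x)) x :=
      (hgd (φ x)).hasFDerivAt.comp x (hφ x).hasFDerivAt
    have heq : (fun y => gradient G (φ y)) = fun y => c • (y - φ y) := by
      funext y
      have h : gradient G (φ y) = -(c • (φ y - y)) :=
        eq_neg_of_add_eq_zero_left (hopt y)
      rw [h, ← smul_neg, neg_sub]
    have h2 : HasFDerivAt (fun y => c • (y - φ y))
        (c • (ContinuousLinearMap.id ℝ E - fderiv ℝ φ x)) x :=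
      ((hasFDerivAt_id x).sub (hφ x).hasFDerivAt).const_smul c
    rw [heq] at h1
    exact h1.unique h2
  have part1 : ∀ x : E,
      (ContinuousLinearMap.id ℝ E + c⁻¹ • fderiv ℝ (gradient G) (φ x)).comp
        (fderiv ℝ φ x) = ContinuousLinearMap.id ℝ E := by
    intro x
    rw [add_comp, id_comp, smul_comp, key x, smul_smul,
      inv_mul_cancel₀ hc.ne', one_smul]
    abel
  refine ⟨part1, ?_⟩
  intro x Tinv hTl hTr
  set A := fderiv ℝ (gradient G) (φ x) with hAdef
  set T := ContinuousLinearMap.id ℝ E + c⁻¹ • A with hTdef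
  have hD : fderiv ℝ φ x = Tinv := by
    calc fderiv ℝ φ x = (ContinuousLinearMap.id ℝ E).comp (fderiv ℝ φ x) :=
          (id_comp _).symm
      _ = (Tinv.comp T).comp (fderiv ℝ φ x) := by rw [hTr]
      _ = Tinv.comp (T.comp (fderiv ℝ φ x)) := comp_assoc _ _ _
      _ = Tinv.comp (ContinuousLinearMap.id ℝ E) := by rw [hTdef, part1 x]
      _ = Tinv := comp_id _
  refine ⟨hD, ?_⟩
  -- symmetry of A
  have hsymG := (hG.contDiffAt (x := φ x)).isSymmSndFDerivAt (by simp)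
  have he' : ∀ (L : StrongDual ℝ E) (w : E), ⟪dualIsoReal E L, w⟫ = L w :=
    fun L w => dualIsoReal_inner L w
  have hAsym : ∀ u v : E, ⟪A u, v⟫ = ⟪u, A v⟫ := by
    intro u v
    have h1 : ⟪A u, v⟫ = fderiv ℝ (fderiv ℝ G) (φ x) u v := by
      rw [hAdef, hA (φ x)]
      simp only [ContinuousLinearMap.comp_apply]
      exact he' _ _
    have h2 : ⟪A v, u⟫ = fderiv ℝ (fderiv ℝ G) (φ x) v u := by
      rw [hAdef, hA (φ x)]
      simp only [ContinuousLinearMap.comp_apply]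
      exact he' _ _
    rw [h1, real_inner_comm, h2]
    exact hsymG u v
  have hTsym : ∀ u v : E, ⟪T u, v⟫ = ⟪u, T v⟫ := by
    intro u v
    simp only [hTdef, ContinuousLinearMap.add_apply, ContinuousLinearMap.coe_id',
      id_eq, ContinuousLinearMap.smul_apply, inner_add_left, inner_add_right,
      real_inner_smul_left, real_inner_smul_right]
    rw [hAsym u v]
  have hTinvsym : ∀ u v : E, ⟪Tinv u, v⟫ = ⟪u, Tinv v⟫ := by
    intro u v
    have hTl' : ∀ w, T (Tinv w) = w := fun w => by
      have := congrArg (fun L => L w) hTl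
      simpa using this
    calc ⟪Tinv u, v⟫ = ⟪Tinv u, T (Tinv v)⟫ := by rw [hTl' v]
      _ = ⟪T (Tinv u), Tinv v⟫ := (hTsym (Tinv u) (Tinv v)).symm
      _ = ⟪u, Tinv v⟫ := by rw [hTl' u]
  intro H hH
  have hfd : fderiv ℝ (H ∘ φ) x = (fderiv ℝ H (φ x)).comp (fderiv ℝ φ x) :=
    fderiv_comp x hH (hφ x)
  apply ext_inner_right ℝ
  intro v
  have hg1' : ⟪gradient (H ∘ φ) x, v⟫ = fderiv ℝ (H ∘ φ) x v := dualIsoReal_inner _ _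
  have hg2' : ∀ w, ⟪gradient H (φ x), w⟫ = fderiv ℝ H (φ x) w := fun w =>
    dualIsoReal_inner _ _
  rw [hg1', hfd, hD]
  calc (fderiv ℝ H (φ x)).comp Tinv v = fderiv ℝ H (φ x) (Tinv v) := rfl
    _ = ⟪gradient H (φ x), Tinv v⟫ := (hg2' (Tinv v)).symm
    _ = ⟪Tinv (gradient H (φ x)), v⟫ := (hTinvsym (gradient H (φ x)) v).symm
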